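/- Under the hypotheses above, the reduced nonholonomic vector field X_red on M/G is tangent to each manifold J̃^{-1}(μ)/F with μ = c_iμ^i, and its restriction to such a leaf is the hamiltonian vector field of the 2-form ω_μ^B with hamiltonian function H_μ := (ι_μ^red)* H_red, where ι_μ^red : J̃^{-1}(μ)/F → T*Q̃/F ≅ M/G is the inclusion and H_red the reduced hamiltonian. -/
import Mathlib


/-!
STATEMENT 12.  Under the hypotheses of the almost symplectic reduction, the
reduced nonholonomic vector field `X_red` on `M/G ≅ T*Q̃/F` is tangent to each
manifold `J̃⁻¹(μ)/F` with `μ = c_i μ^i`, and its restriction to such a leaf is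
the hamiltonian vector field of the 2-form `ω_μ^B` with hamiltonian function
`H_μ = (ι_μ^red)^* H_red`.

Abstract model: `Mt ≅ T*Q̃` (tangent model `TMt`) carries the partially reduced
dynamics `X̃_nh`, hamiltonian for `Ω̃_B` and `H̃`, which preserves the partially
reduced horizontal gauge momenta `J̃_i`; `Mbar ≅ T*Q̃/F ≅ M/G` (tangent model
`TMbar`) carries the reduced dynamics `X_red = TρF(X̃_nh)`, the reduced momenta
`J̄_i` (`ρF^* J̄_i = J̃_i`) and hamiltonian `H_red` (`ρF^* H_red = H̃`);
`J̃⁻¹(μ)/F` is identified with the leaf `{x | J̄_i x = c_i}` of `Mbar`, with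
tangent spaces `∩_i Ker dJ̄_i`, and `ω_μ^B` is the reduced almost symplectic
form, `ι_μ^* Ω̃_B = ρ_μ^* ω_μ^B`.
-/

theorem statement12
    {Mt Mbar TMt TMbar : Type*}
    [AddCommGroup TMt] [Module ℝ TMt] [AddCommGroup TMbar] [Module ℝ TMbar]
    {k : ℕ}
    -- the orbit projection ρ_F : T*Q̃ → T*Q̃/F ≅ M/G and its tangent maps
    (ρF : Mt → Mbar) (hρF : Function.Surjective ρF)
    (TρF : Mt → TMt →ₗ[ℝ] TMbar) (hTρF : ∀ α, Function.Surjective (TρF α))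
    -- abstract differentials and the chain rule along ρ_F
    (dMt : (Mt → ℝ) → Mt → TMt →ₗ[ℝ] ℝ)
    (dMbar : (Mbar → ℝ) → Mbar → TMbar →ₗ[ℝ] ℝ)
    (hchain : ∀ (f : Mbar → ℝ) (α : Mt),
      dMt (fun α' => f (ρF α')) α = (dMbar f (ρF α)).comp (TρF α))
    -- the partially reduced dynamics and the reduced dynamics X_red = TρF(X̃_nh)
    (Xnht : (α : Mt) → TMt) (Xred : (x : Mbar) → TMbar)
    (hXred : ∀ α : Mt, Xred (ρF α) = TρF α (Xnht α))
    -- hamiltonians: i_{X̃_nh} Ω̃_B = dH̃ with ρ_F^* H_red = H̃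
    (ΩB : Mt → TMt →ₗ[ℝ] TMt →ₗ[ℝ] ℝ)
    (Ht : Mt → ℝ) (Hred : Mbar → ℝ) (hHred : ∀ α : Mt, Hred (ρF α) = Ht α)
    (hdyn : ∀ (α : Mt) (w : TMt), ΩB α (Xnht α) w = dMt Ht α w)
    -- the J̃_i are conserved by X̃_nh, and J̄_i are their reductions
    (Jt : Fin k → Mt → ℝ) (Jbar : Fin k → Mbar → ℝ)
    (hJbar : ∀ (i : Fin k) (α : Mt), Jbar i (ρF α) = Jt i α)
    (hJcons : ∀ (i : Fin k) (α : Mt), dMt (Jt i) α (Xnht α) = 0)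
    -- the level μ = c_i μ^i : J̃⁻¹(μ) upstairs, and the leaf J̃⁻¹(μ)/F downstairs
    (c : Fin k → ℝ)
    (L : Set Mt) (hL : L = {α : Mt | ∀ i : Fin k, Jt i α = c i})
    (leaf : Set Mbar) (hleaf : leaf = ρF '' L)
    -- tangent spaces to the leaf J̃⁻¹(μ)/F inside M/G
    (Tleaf : (x : Mbar) → Submodule ℝ TMbar)
    (hTleaf : ∀ x : Mbar, Tleaf x = ⨅ i : Fin k, LinearMap.ker (dMbar (Jbar i) x))
    -- the reduced almost symplectic form ω_μ^B : ι_μ^* Ω̃_B = ρ_μ^* ω_μ^B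
    (ωμ : Mbar → TMbar →ₗ[ℝ] TMbar →ₗ[ℝ] ℝ)
    (hωμ : ∀ α ∈ L, ∀ v w : TMt,
      (∀ i : Fin k, dMt (Jt i) α v = 0) → (∀ i : Fin k, dMt (Jt i) α w = 0) →
        ΩB α v w = ωμ (ρF α) (TρF α v) (TρF α w)) :
    ∀ x ∈ leaf,
      -- X_red is tangent to J̃⁻¹(μ)/F :
      ((∀ i : Fin k, dMbar (Jbar i) x (Xred x) = 0) ∧ Xred x ∈ Tleaf x) ∧
      -- on the leaf, X_red is hamiltonian for ω_μ^B with hamiltonian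
      -- H_μ = (ι_μ^red)^* H_red :
      (∀ w ∈ Tleaf x, ωμ x (Xred x) w = dMbar Hred x w) := by

  intro x hx
  rw [hleaf] at hx
  obtain ⟨α, hαL, rfl⟩ := hx
  -- key differential identities
  have hJt : ∀ i : Fin k, dMt (Jt i) α = (dMbar (Jbar i) (ρF α)).comp (TρF α) := by
    intro i
    have : (fun α' => Jbar i (ρF α')) = Jt i := funext fun α' => hJbar i α'
    rw [← this]; exact hchain (Jbar i) α
  have hHt : dMt Ht α = (dMbar Hred (ρF α)).comp (TρF α) := by
    have : (fun α' => Hred (ρF α')) = Ht := funext fun α' => hHred α'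
    rw [← this]; exact hchain Hred α
  have htan : ∀ i : Fin k, dMbar (Jbar i) (ρF α) (Xred (ρF α)) = 0 := by
    intro i
    rw [hXred α]
    have := hJcons i α
    rwa [hJt i] at this
  refine ⟨⟨htan, ?_⟩, ?_⟩
  · rw [hTleaf]
    exact Submodule.mem_iInf _ |>.mpr fun i => htan i
  · intro w hw
    rw [hTleaf] at hw
    have hw' : ∀ i : Fin k, dMbar (Jbar i) (ρF α) w = 0 := fun i =>
      (Submodule.mem_iInf _).mp hw i
    obtain ⟨v, rfl⟩ := hTρF α w
    have hvker : ∀ i : Fin k, dMt (Jt i) α v = 0 := by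
      intro i; rw [hJt i]; exact hw' i
    have hXker : ∀ i : Fin k, dMt (Jt i) α (Xnht α) = 0 := by
      exact fun i => hJcons i α
    have := hωμ α hαL (Xnht α) v (fun i => hJcons i α) hvker
    rw [hXred α, ← this, hdyn α v, hHt]
    rfl
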